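/- Let f : ℝ → ℝ be nonnegative and differentiable, and let ρ ≥ 0. Then the following are equivalent: (i) |f'(u)| ≤ ρ·√(f(u)) for all u ∈ ℝ; (ii) |√(f(u)) − √(f(v))| ≤ (ρ/2)·|u − v| for all u, v ∈ ℝ. -/

import Mathlib

open Filter Topology

theorem stmt_10 (f : ℝ → ℝ) (hf0 : ∀ u, 0 ≤ f u) (hdiff : Differentiable ℝ f)
    (ρ : ℝ) (hρ : 0 ≤ ρ) :
    (∀ u : ℝ, |deriv f u| ≤ ρ * Real.sqrt (f u)) ↔
      (∀ u v : ℝ, |Real.sqrt (f u) - Real.sqrt (f v)| ≤ ρ / 2 * |u - v|) := by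
  constructor
  · intro hd u v
    have key : ∀ ε : ℝ, 0 < ε →
        |Real.sqrt (f u + ε) - Real.sqrt (f v + ε)| ≤ ρ / 2 * |u - v| := by
      intro ε hε
      set g : ℝ → ℝ := fun x => Real.sqrt (f x + ε) with hg
      have hpos : ∀ x, 0 < f x + ε := fun x => by
        have := hf0 x; linarith
      have hder : ∀ x, HasDerivAt g (deriv f x / (2 * Real.sqrt (f x + ε))) x := by
        intro x
        have h1 : HasDerivAt (fun y => f y + ε) (deriv f x) x :=
          ((hdiff x).hasDerivAt).add_const ε
        have h2 := (Real.hasDerivAt_sqrt (ne_of_gt (hpos x))).comp x h1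
        refine h2.congr_deriv ?_
        ring
      have hgd : ∀ x, DifferentiableAt ℝ g x := fun x => (hder x).differentiableAt
      have hbound : ∀ x, ‖deriv g x‖ ≤ ρ / 2 := by
        intro x
        rw [(hder x).deriv]
        have hsx : 0 < Real.sqrt (f x + ε) := Real.sqrt_pos.2 (hpos x)
        have h1 : |deriv f x| ≤ ρ * Real.sqrt (f x + ε) := by
          refine (hd x).trans ?_
          exact mul_le_mul_of_nonneg_left
            (Real.sqrt_le_sqrt (by linarith)) hρ
        rw [Real.norm_eq_abs, abs_div, abs_of_pos (by linarith : (0:ℝ) < 2 * Real.sqrt (f x + ε))]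
        rw [div_le_iff₀ (by linarith)]
        calc |deriv f x| ≤ ρ * Real.sqrt (f x + ε) := h1
          _ = ρ / 2 * (2 * Real.sqrt (f x + ε)) := by ring
      have := Convex.norm_image_sub_le_of_norm_deriv_le
        (s := Set.univ) (fun x _ => hgd x) (fun x _ => hbound x)
        convex_univ (Set.mem_univ v) (Set.mem_univ u)
      simpa [Real.norm_eq_abs] using this
    -- pass to the limit ε → 0
    refine le_of_forall_pos_le_add ?_
    intro δ hδ
    have hε : (0:ℝ) < (δ/2)^2 := by positivity
    have hk := key ((δ/2)^2) hε
    have sq2 : Real.sqrt ((δ/2)^2) = δ/2 := Real.sqrt_sq (by linarith)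
    have haux : ∀ x, Real.sqrt (f x) ≤ Real.sqrt (f x + (δ/2)^2) ∧
        Real.sqrt (f x + (δ/2)^2) ≤ Real.sqrt (f x) + δ/2 := by
      intro x
      constructor
      · exact Real.sqrt_le_sqrt (by linarith [hε])
      · have : Real.sqrt (f x + (δ/2)^2) ≤ Real.sqrt ((Real.sqrt (f x) + δ/2)^2) := by
          apply Real.sqrt_le_sqrt
          have h1 : Real.sqrt (f x) ^ 2 = f x := Real.sq_sqrt (hf0 x)
          have h2 : 0 ≤ Real.sqrt (f x) := Real.sqrt_nonneg _
          nlinarith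
        rwa [Real.sqrt_sq (by positivity)] at this
    obtain ⟨hu1, hu2⟩ := haux u
    obtain ⟨hv1, hv2⟩ := haux v
    rw [abs_sub_le_iff] at hk ⊢
    constructor
    · calc Real.sqrt (f u) - Real.sqrt (f v)
          ≤ Real.sqrt (f u + (δ/2)^2) - (Real.sqrt (f v + (δ/2)^2) - δ/2) := by linarith
        _ ≤ ρ / 2 * |u - v| + δ := by linarith [hk.1]
    · calc Real.sqrt (f v) - Real.sqrt (f u)
          ≤ Real.sqrt (f v + (δ/2)^2) - (Real.sqrt (f u + (δ/2)^2) - δ/2) := by linarith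
        _ ≤ ρ / 2 * |u - v| + δ := by linarith [hk.2]
  · intro hl u
    have hf' : HasDerivAt f (deriv f u) u := (hdiff u).hasDerivAt
    rw [hasDerivAt_iff_tendsto_slope] at hf'
    have h1 : Tendsto (fun x => |slope f u x|) (𝓝[≠] u) (𝓝 |deriv f u|) := hf'.abs
    have h2 : Tendsto (fun x : ℝ => ρ * Real.sqrt (f u) + ρ^2/4 * |x - u|) (𝓝[≠] u)
        (𝓝 (ρ * Real.sqrt (f u))) := by
      have hc : ContinuousAt (fun x : ℝ => ρ * Real.sqrt (f u) + ρ^2/4 * |x - u|) u := by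
        fun_prop
      have := hc.tendsto.mono_left (nhdsWithin_le_nhds (s := {u}ᶜ))
      simpa using this
    refine le_of_tendsto_of_tendsto' h1 h2 ?_
    intro x
    rcases eq_or_ne x u with rfl | hx
    · simp [slope_def_field]
      positivity
    · have hxu : x - u ≠ 0 := sub_ne_zero.2 hx
      have habs : 0 < |x - u| := abs_pos.2 hxu
      have hlip := hl x u
      have hsum : Real.sqrt (f x) + Real.sqrt (f u) ≤ 2 * Real.sqrt (f u) + ρ/2 * |x - u| := by
        have : Real.sqrt (f x) - Real.sqrt (f u) ≤ ρ/2 * |x - u| := (abs_le.1 hlip).2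
        linarith
      have hfx : Real.sqrt (f x) ^ 2 = f x := Real.sq_sqrt (hf0 x)
      have hfu : Real.sqrt (f u) ^ 2 = f u := Real.sq_sqrt (hf0 u)
      have hdiff2 : |f x - f u| ≤ ρ * Real.sqrt (f u) * |x - u| + ρ^2/4 * |x - u|^2 := by
        have heq : f x - f u = (Real.sqrt (f x) - Real.sqrt (f u)) *
            (Real.sqrt (f x) + Real.sqrt (f u)) := by nlinarith
        rw [heq, abs_mul, abs_of_nonneg (by positivity : (0:ℝ) ≤ Real.sqrt (f x) + Real.sqrt (f u))]
        calc |Real.sqrt (f x) - Real.sqrt (f u)| * (Real.sqrt (f x) + Real.sqrt (f u))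
            ≤ (ρ/2 * |x - u|) * (2 * Real.sqrt (f u) + ρ/2 * |x - u|) := by
              apply mul_le_mul hlip hsum (by positivity) (by positivity)
          _ = ρ * Real.sqrt (f u) * |x - u| + ρ^2/4 * |x - u|^2 := by ring
      rw [slope_def_field, div_eq_mul_inv, abs_mul, abs_inv]
      rw [← div_eq_mul_inv, div_le_iff₀ habs]
      calc |f x - f u| ≤ ρ * Real.sqrt (f u) * |x - u| + ρ^2/4 * |x - u|^2 := hdiff2
        _ = (ρ * Real.sqrt (f u) + ρ^2/4 * |x - u|) * |x - u| := by ring
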